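/- arXiv:1707.03653 — 3 statements merged into one kernel-verified Lean document; each statement's English description precedes it below -/
import Mathlib

section
/- Let d ≥ 3, κ ≥ 2d. There exists a constant C = C(d,κ) > 0 such that for all measurable α₁, α₂ : ℝ^{2d} → ℂ with ‖α_i‖_{A^{κ,2}} < ∞, the forces F_i(x) := −∫_{ℝ^d} ∇Γ(x−y) ρ_i(y) dy with ρ_i(y) := ∫_{ℝ^d} |α_i(y,w)|² dw satisfy ‖F₁ − F₂‖_{L^∞(ℝ^d)} ≤ C (‖α₁‖_{A^{κ,2}} + ‖α₂‖_{A^{κ,2}}) ‖α₁ − α₂‖_{A^{κ,2}}. -/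
open MeasureTheory
open scoped ENNReal NNReal

/-- `ℝ^d` as a Euclidean space. -/
abbrev E (d : ℕ) : Type := EuclideanSpace ℝ (Fin d)

/-- The `A^{κ,p}` norm: `sup_{R ≥ 0} (1+R)^{-κ/p} (∫ sup_{|z̄| ≤ R} ‖f(z+z̄)‖^p dz)^{1/p}`. -/
noncomputable def Anorm {G F : Type*} [NormedAddCommGroup G] [MeasureSpace G]
    [NormedAddCommGroup F] (κ p : ℝ) (f : G → F) : ℝ≥0∞ :=
  ⨆ R : NNReal, (ENNReal.ofReal (1 + (R : ℝ))) ^ (-(κ / p)) *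
    (∫⁻ z, ⨆ w ∈ Metric.closedBall (0 : G) (R : ℝ),
      ENNReal.ofReal (‖f (z + w)‖ ^ p)) ^ (1 / p)

/-- The gradient `∇Γ(x) = x / (c_d |x|^d)` of the Newtonian potential on `ℝ^d`,
where `c_d = d·ω_d` is the surface measure of the unit sphere `S^{d-1}`. -/
noncomputable def gradNewton (d : ℕ) (x : E d) : E d :=
  (((d : ℝ) * (volume (Metric.ball (0 : E d) 1)).toReal) * ‖x‖ ^ (d : ℝ))⁻¹ • x

namespace Statement14Aux

open Metric

noncomputable section

variable {d : ℕ}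

/-- Squared pointwise quantity appearing in `Anorm κ 2`. -/
def sq (f : E d × E d → ℂ) (z : E d × E d) : ℝ≥0∞ := ENNReal.ofReal (‖f z‖ ^ (2:ℝ))

lemma sq_eq (f : E d × E d → ℂ) (z : E d × E d) :
    sq f z = ENNReal.ofReal ‖f z‖ ^ (2:ℝ) :=
  (ENNReal.ofReal_rpow_of_nonneg (norm_nonneg _) (by norm_num : (0:ℝ) ≤ 2)).symm

lemma measurable_sq {f : E d × E d → ℂ} (hf : Measurable f) : Measurable (sq f) :=
  (hf.norm.pow_const _).ennreal_ofReal

/-- `L²` bound from the `Anorm` (term `R = 0`). -/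
lemma l2_le (κ : ℝ) (hκ : 0 ≤ κ) (f : E d × E d → ℂ) :
    (∫⁻ z, sq f z) ^ (1/(2:ℝ)) ≤ Anorm κ 2 f := by
  have h := le_iSup (fun R : NNReal => (ENNReal.ofReal (1 + (R : ℝ))) ^ (-(κ / 2)) *
    (∫⁻ z, ⨆ w ∈ Metric.closedBall (0 : E d × E d) (R : ℝ),
      ENNReal.ofReal (‖f (z + w)‖ ^ (2:ℝ))) ^ (1 / (2:ℝ))) 0
  simpa [Anorm, sq, Metric.closedBall_zero] using h

/-- Slice bound from the `Anorm` (term `R = 1`): uniform control of fiber `L²` norms. -/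
lemma slice_le (κ : ℝ) (hκ : 0 ≤ κ) {f : E d × E d → ℂ} (hf : Measurable f) (y : E d) :
    ∫⁻ w, sq f (y, w) ≤
      ((volume (ball (0 : E d) 1))⁻¹ * ENNReal.ofReal 2 ^ κ) * (Anorm κ 2 f) ^ (2:ℝ) := by
  set v : ℝ≥0∞ := volume (ball (0 : E d) 1) with hv
  have hv0 : v ≠ 0 := (measure_ball_pos volume _ one_pos).ne'
  have hvt : v ≠ ⊤ := measure_ball_lt_top.ne
  set S : E d × E d → ℝ≥0∞ := fun z => ⨆ w ∈ Metric.closedBall (0 : E d × E d) (1 : ℝ),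
      ENNReal.ofReal (‖f (z + w)‖ ^ (2:ℝ)) with hS
  -- the `R = 1` term of the Anorm
  have hA : ENNReal.ofReal 2 ^ (-(κ / 2)) * (∫⁻ z, S z) ^ (1/(2:ℝ)) ≤ Anorm κ 2 f := by
    have h := le_iSup (fun R : NNReal => (ENNReal.ofReal (1 + (R : ℝ))) ^ (-(κ / 2)) *
      (∫⁻ z, ⨆ w ∈ Metric.closedBall (0 : E d × E d) (R : ℝ),
        ENNReal.ofReal (‖f (z + w)‖ ^ (2:ℝ))) ^ (1 / (2:ℝ))) 1
    simpa [Anorm, hS, one_add_one_eq_two] using h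
  have hB0 : (ENNReal.ofReal 2 : ℝ≥0∞) ^ (κ/2) ≠ 0 := by
    simp [ENNReal.rpow_eq_zero_iff]
  have hBt : (ENNReal.ofReal 2 : ℝ≥0∞) ^ (κ/2) ≠ ⊤ := by
    simp [ENNReal.rpow_eq_top_iff]
  have hS2 : (∫⁻ z, S z) ^ (1/(2:ℝ)) ≤ ENNReal.ofReal 2 ^ (κ/2) * Anorm κ 2 f := by
    calc (∫⁻ z, S z) ^ (1/(2:ℝ))
        = ENNReal.ofReal 2 ^ (κ/2) * (ENNReal.ofReal 2 ^ (-(κ/2)) * (∫⁻ z, S z) ^ (1/(2:ℝ))) := by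
          rw [← mul_assoc, ← ENNReal.rpow_add _ _ (by simp) (by simp), add_neg_cancel,
            ENNReal.rpow_zero, one_mul]
      _ ≤ ENNReal.ofReal 2 ^ (κ/2) * Anorm κ 2 f := mul_le_mul_right hA _
  have hSint : ∫⁻ z, S z ≤ ENNReal.ofReal 2 ^ κ * (Anorm κ 2 f) ^ (2:ℝ) := by
    have h2 : ((∫⁻ z, S z) ^ (1/(2:ℝ))) ^ (2:ℝ) ≤
        (ENNReal.ofReal 2 ^ (κ/2) * Anorm κ 2 f) ^ (2:ℝ) :=
      ENNReal.rpow_le_rpow hS2 (by norm_num)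
    calc ∫⁻ z, S z = ((∫⁻ z, S z) ^ (1/(2:ℝ))) ^ (2:ℝ) := by
          rw [← ENNReal.rpow_mul]; norm_num
      _ ≤ (ENNReal.ofReal 2 ^ (κ/2) * Anorm κ 2 f) ^ (2:ℝ) := h2
      _ = ENNReal.ofReal 2 ^ κ * (Anorm κ 2 f) ^ (2:ℝ) := by
          rw [ENNReal.mul_rpow_of_nonneg _ _ (by norm_num : (0:ℝ) ≤ 2), ← ENNReal.rpow_mul]
          norm_num
  -- averaging over a unit ball in the `x` variable
  have key : v * ∫⁻ w, sq f (y, w) ≤ ∫⁻ z, S z := by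
    have hT : ∀ z : E d × E d,
        (ball y 1).indicator (fun _ => (1:ℝ≥0∞)) z.1 * sq f (y, z.2) ≤ S z := by
      rintro ⟨x', w⟩
      by_cases hx' : x' ∈ ball y 1
      · rw [Set.indicator_of_mem hx', one_mul]
        have hmem : ((y - x', 0) : E d × E d) ∈ Metric.closedBall (0 : E d × E d) (1:ℝ) := by
          rw [mem_closedBall_zero_iff]
          have : ‖((y - x', 0) : E d × E d)‖ = max ‖y - x'‖ ‖(0 : E d)‖ := Prod.norm_def _
          rw [this]
          simp only [norm_zero]
          have : ‖y - x'‖ ≤ 1 := by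
            rw [← dist_eq_norm, dist_comm]
            exact (mem_ball.mp hx').le
          exact max_le this zero_le_one
        have heq : ((x', w) : E d × E d) + (y - x', 0) = (y, w) := by
          ext <;> simp
        refine le_trans (le_of_eq ?_) (le_biSup (f := fun w' : E d × E d =>
            ENNReal.ofReal (‖f ((x', w) + w')‖ ^ (2:ℝ))) hmem)
        simp only [heq, sq]
      · rw [Set.indicator_of_notMem hx', zero_mul]; exact zero_le
    set ind : E d → ℝ≥0∞ := (ball y 1).indicator (fun _ => (1:ℝ≥0∞)) with hind
    have hindm : Measurable ind := measurable_one.indicator measurableSet_ball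
    have hindint : ∫⁻ x', ind x' = v := by
      rw [hind, lintegral_indicator measurableSet_ball]
      simp [Measure.addHaar_ball_center, hv]
    have hindt : ∀ x', ind x' ≠ ⊤ := by
      intro x'; by_cases h : x' ∈ ball y 1 <;> simp [hind, h]
    calc v * ∫⁻ w, sq f (y, w)
        = (∫⁻ x', ind x') * ∫⁻ w, sq f (y, w) := by rw [hindint]
      _ = ∫⁻ x', ind x' * ∫⁻ w, sq f (y, w) := (lintegral_mul_const _ hindm).symm
      _ = ∫⁻ x', ∫⁻ w, ind x' * sq f (y, w) := by
          refine lintegral_congr fun x' => (lintegral_const_mul' _ _ (hindt x')).symm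
      _ = ∫⁻ z : E d × E d, ind z.1 * sq f (y, z.2) := by
          rw [MeasureTheory.Measure.volume_eq_prod, lintegral_prod]
          exact ((hindm.comp measurable_fst).mul
            ((measurable_sq hf).comp (measurable_const.prodMk measurable_snd))).aemeasurable
      _ ≤ ∫⁻ z, S z := lintegral_mono hT
  -- put everything together
  have := le_trans key hSint
  calc ∫⁻ w, sq f (y, w) = v⁻¹ * (v * ∫⁻ w, sq f (y, w)) := by
        rw [← mul_assoc, ENNReal.inv_mul_cancel hv0 hvt, one_mul]
    _ ≤ v⁻¹ * (ENNReal.ofReal 2 ^ κ * (Anorm κ 2 f) ^ (2:ℝ)) := mul_le_mul_right this _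
    _ = (v⁻¹ * ENNReal.ofReal 2 ^ κ) * (Anorm κ 2 f) ^ (2:ℝ) := by rw [mul_assoc]

/-- The norm of the Newtonian force kernel. -/
lemma gradNewton_enorm (hd : 2 ≤ d) (u : E d) :
    (‖gradNewton d u‖₊ : ℝ≥0∞) =
      (ENNReal.ofReal ((d : ℝ) * (volume (ball (0 : E d) 1)).toReal))⁻¹ *
        ENNReal.ofReal (‖u‖ ^ ((1:ℝ) - d)) := by
  set c : ℝ := (d : ℝ) * (volume (ball (0 : E d) 1)).toReal with hc
  have hc0 : 0 < c := by
    apply mul_pos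
    · have : 0 < d := by omega
      exact_mod_cast this
    · exact ENNReal.toReal_pos (measure_ball_pos volume _ one_pos).ne' measure_ball_lt_top.ne
  rcases eq_or_ne u 0 with h0 | h0
  · have h1d : ((1:ℝ) - d) ≠ 0 := by
      have : (2:ℝ) ≤ d := by exact_mod_cast hd
      intro h; linarith
    simp [gradNewton, h0, Real.zero_rpow h1d]
  · have hu0 : (0:ℝ) < ‖u‖ := norm_pos_iff.mpr h0
    have hnorm : ‖gradNewton d u‖ = c⁻¹ * ‖u‖ ^ ((1:ℝ) - d) := by
      have key : ‖u‖ ^ ((1:ℝ) - d) = ‖u‖ * (‖u‖ ^ (d:ℝ))⁻¹ := by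
        rw [sub_eq_add_neg, Real.rpow_add hu0, Real.rpow_one, Real.rpow_neg hu0.le]
      rw [gradNewton, norm_smul, Real.norm_eq_abs, abs_of_nonneg (by positivity), mul_inv, key]
      ring
    rw [← enorm_eq_nnnorm, ← ofReal_norm, hnorm, ENNReal.ofReal_mul (by positivity),
      ENNReal.ofReal_inv_of_pos hc0]

/-- Finiteness of the local integral of the kernel. -/
lemma kernel_finite (hd : 2 ≤ d) :
    ∫⁻ u in ball (0:E d) 1, ENNReal.ofReal (‖u‖ ^ ((1:ℝ) - d)) < ⊤ := by
  classical
  have hd1 : (2:ℝ) ≤ (d:ℝ) := by exact_mod_cast hd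
  have hdr : (1:ℝ) - d ≤ 0 := by linarith
  set v : ℝ≥0∞ := volume (ball (0 : E d) 1) with hv
  set g : E d → ℝ≥0∞ := fun u => ENNReal.ofReal (‖u‖ ^ ((1:ℝ) - d)) with hg
  set A : ℕ → Set (E d) := fun k => ball (0:E d) ((2:ℝ)⁻¹ ^ k) \ ball 0 ((2:ℝ)⁻¹ ^ (k+1))
    with hA
  have hcover : ball (0:E d) 1 ⊆ {0} ∪ ⋃ k, A k := by
    intro u hu
    rcases eq_or_ne u 0 with h0 | h0
    · exact Or.inl (by simp [h0])
    refine Or.inr ?_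
    have ht0 : 0 < ‖u‖ := norm_pos_iff.mpr h0
    have ht1 : ‖u‖ < 1 := mem_ball_zero_iff.mp hu
    have hex : ∃ n : ℕ, (2:ℝ)⁻¹ ^ n ≤ ‖u‖ := by
      obtain ⟨n, hn⟩ := exists_pow_lt_of_lt_one ht0 (by norm_num : (2:ℝ)⁻¹ < 1)
      exact ⟨n, hn.le⟩
    set n₀ := Nat.find hex with hn₀
    have hn₀P : (2:ℝ)⁻¹ ^ n₀ ≤ ‖u‖ := Nat.find_spec hex
    have hn₀pos : 0 < n₀ := by
      rcases Nat.eq_zero_or_pos n₀ with h | h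
      · exfalso; rw [h] at hn₀P; simp at hn₀P; linarith
      · exact h
    have hlt : ‖u‖ < (2:ℝ)⁻¹ ^ (n₀ - 1) := by
      have := Nat.find_min hex (Nat.sub_lt hn₀pos one_pos)
      push_neg at this
      exact this
    refine Set.mem_iUnion.mpr ⟨n₀ - 1, mem_ball_zero_iff.mpr hlt, fun hmem => ?_⟩
    rw [mem_ball_zero_iff] at hmem
    have hn1 : n₀ - 1 + 1 = n₀ := by omega
    rw [hn1] at hmem
    linarith
  have hterm : ∀ k : ℕ, ∫⁻ u in A k, g u ≤
      (ENNReal.ofReal ((2:ℝ) ^ ((d:ℝ)-1)) * v) * ENNReal.ofReal (2:ℝ)⁻¹ ^ k := by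
    intro k
    have hball : volume (A k) ≤ ENNReal.ofReal (((2:ℝ)⁻¹ ^ k) ^ (d:ℕ)) * v := by
      refine le_trans (measure_mono Set.diff_subset) ?_
      rw [Measure.addHaar_ball_of_pos volume _ (by positivity), finrank_euclideanSpace_fin]
    have hpt : ∀ u ∈ A k, g u ≤ ENNReal.ofReal (((2:ℝ)⁻¹ ^ (k+1)) ^ ((1:ℝ) - d)) := by
      intro u hu
      apply ENNReal.ofReal_le_ofReal
      exact Real.rpow_le_rpow_of_nonpos (by positivity)
        (le_of_not_gt fun h => hu.2 (mem_ball_zero_iff.mpr h)) hdr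
    calc ∫⁻ u in A k, g u
        ≤ ∫⁻ _ in A k, ENNReal.ofReal (((2:ℝ)⁻¹ ^ (k+1)) ^ ((1:ℝ) - d)) :=
          setLIntegral_mono' (measurableSet_ball.diff measurableSet_ball) hpt
      _ = ENNReal.ofReal (((2:ℝ)⁻¹ ^ (k+1)) ^ ((1:ℝ) - d)) * volume (A k) :=
          setLIntegral_const _ _
      _ ≤ ENNReal.ofReal (((2:ℝ)⁻¹ ^ (k+1)) ^ ((1:ℝ) - d)) *
            (ENNReal.ofReal (((2:ℝ)⁻¹ ^ k) ^ (d:ℕ)) * v) := mul_le_mul_right hball _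
      _ = (ENNReal.ofReal ((2:ℝ) ^ ((d:ℝ)-1)) * v) * ENNReal.ofReal (2:ℝ)⁻¹ ^ k := by
          have h2 : ∀ m : ℕ, ((2:ℝ)⁻¹) ^ m = (2:ℝ) ^ (-(m:ℝ)) := by
            intro m
            rw [inv_pow, Real.rpow_neg (by norm_num : (0:ℝ) ≤ 2), Real.rpow_natCast]
          have hre : ((2:ℝ)⁻¹ ^ (k+1)) ^ ((1:ℝ) - d) * ((2:ℝ)⁻¹ ^ k) ^ (d:ℕ)
              = (2:ℝ) ^ ((d:ℝ)-1) * (2:ℝ)⁻¹ ^ k := by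
            rw [h2 (k+1), h2 k, ← Real.rpow_natCast ((2:ℝ) ^ (-(k:ℝ))) d,
              ← Real.rpow_mul (by norm_num : (0:ℝ) ≤ 2),
              ← Real.rpow_mul (by norm_num : (0:ℝ) ≤ 2),
              ← Real.rpow_add (by norm_num : (0:ℝ) < 2),
              ← Real.rpow_add (by norm_num : (0:ℝ) < 2)]
            congr 1
            push_cast
            ring
          rw [← mul_assoc, ← ENNReal.ofReal_mul (by positivity), hre,
            ENNReal.ofReal_mul (by positivity), ENNReal.ofReal_pow (by norm_num)]
          ring
  calc ∫⁻ u in ball (0:E d) 1, g u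
      ≤ ∫⁻ u in ({0} ∪ ⋃ k, A k : Set (E d)), g u := lintegral_mono_set hcover
    _ ≤ (∫⁻ u in ({0} : Set (E d)), g u) + ∫⁻ u in ⋃ k, A k, g u := by
        refine le_trans (lintegral_mono' (Measure.restrict_union_le _ _) le_rfl) ?_
        rw [lintegral_add_measure]
    _ = ∫⁻ u in ⋃ k, A k, g u := by
        haveI : Nontrivial (E d) := by
          apply nontrivial_of_ne (EuclideanSpace.single ⟨0, by omega⟩ (1:ℝ)) 0
          intro h
          have := congrArg (fun z : E d => z ⟨0, by omega⟩) h
          simp [EuclideanSpace.single] at this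
        have h0 : volume ({0} : Set (E d)) = 0 := measure_singleton 0
        rw [Measure.restrict_eq_zero.mpr h0, lintegral_zero_measure, zero_add]
    _ ≤ ∑' k, ∫⁻ u in A k, g u := lintegral_iUnion_le _ _
    _ ≤ ∑' k, (ENNReal.ofReal ((2:ℝ) ^ ((d:ℝ)-1)) * v) * ENNReal.ofReal (2:ℝ)⁻¹ ^ k :=
        ENNReal.tsum_le_tsum hterm
    _ = (ENNReal.ofReal ((2:ℝ) ^ ((d:ℝ)-1)) * v) * ∑' k, ENNReal.ofReal (2:ℝ)⁻¹ ^ k :=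
        ENNReal.tsum_mul_left
    _ < ⊤ := by
        rw [ENNReal.tsum_geometric]
        refine ENNReal.mul_lt_top (ENNReal.mul_lt_top ENNReal.ofReal_lt_top
          measure_ball_lt_top) ?_
        rw [ENNReal.inv_lt_top]
        have : ENNReal.ofReal (2:ℝ)⁻¹ < 1 := by
          rw [← ENNReal.ofReal_one]
          exact (ENNReal.ofReal_lt_ofReal_iff one_pos).mpr (by norm_num)
        exact tsub_pos_of_lt this

/-- Convolution bound against the Newton kernel: near/far splitting. -/
lemma conv_bound (hd : 2 ≤ d) (x : E d) (h : E d → ℝ≥0∞) :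
    ∫⁻ y, h y * (‖gradNewton d (x - y)‖₊ : ℝ≥0∞) ≤
      (ENNReal.ofReal ((d : ℝ) * (volume (ball (0 : E d) 1)).toReal))⁻¹ *
      ((∫⁻ u in ball (0:E d) 1, ENNReal.ofReal (‖u‖ ^ ((1:ℝ)-d))) * (⨆ y, h y)
        + ∫⁻ y, h y) := by
  set cE := ENNReal.ofReal ((d : ℝ) * (volume (ball (0 : E d) 1)).toReal) with hcE
  have hc0 : (0:ℝ) < (d : ℝ) * (volume (ball (0 : E d) 1)).toReal := by
    apply mul_pos
    · have : 0 < d := by omega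
      exact_mod_cast this
    · exact ENNReal.toReal_pos (measure_ball_pos volume _ one_pos).ne' measure_ball_lt_top.ne
  have hcE0 : cE ≠ 0 := by
    rw [hcE]
    simp only [ne_eq, ENNReal.ofReal_eq_zero, not_le]
    exact hc0
  have hinvt : cE⁻¹ ≠ ⊤ := ENNReal.inv_ne_top.mpr hcE0
  set F : E d → ℝ≥0∞ := fun u => ENNReal.ofReal (‖u‖ ^ ((1:ℝ) - d)) with hF
  have hFm : Measurable F := (measurable_norm.pow_const _).ennreal_ofReal
  have hFk : Measurable fun y => F (x - y) := hFm.comp (measurable_const.sub measurable_id)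
  have hpt : ∀ y, h y * (‖gradNewton d (x - y)‖₊ : ℝ≥0∞) = cE⁻¹ * (F (x - y) * h y) := by
    intro y
    rw [gradNewton_enorm hd, ← hcE]
    simp only [hF]
    ring
  set M := ⨆ y, h y with hM
  have hnear : ∫⁻ y in ball x 1, F (x - y) * h y ≤ (∫⁻ u in ball (0:E d) 1, F u) * M := by
    have h1 : ∫⁻ y in ball x 1, F (x - y) * h y ≤ ∫⁻ y in ball x 1, F (x - y) * M :=
      lintegral_mono fun y => mul_le_mul_right (le_iSup h y) _
    have h2 : ∫⁻ y in ball x 1, F (x - y) * M = (∫⁻ y in ball x 1, F (x - y)) * M :=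
      lintegral_mul_const M hFk
    have hmp := MeasureTheory.Measure.measurePreserving_sub_left (volume : Measure (E d)) x
    have hpre : (fun y => x - y) ⁻¹' (ball (0:E d) 1) = ball x 1 := by
      ext y
      simp [mem_ball, dist_eq_norm, norm_sub_rev]
    have h3 : ∫⁻ y in ball x 1, F (x - y) = ∫⁻ u in ball (0:E d) 1, F u := by
      rw [← hpre]
      exact hmp.setLIntegral_comp_preimage measurableSet_ball hFm
    rw [h2, h3] at h1
    exact h1
  have hfar : ∫⁻ y in (ball x 1)ᶜ, F (x - y) * h y ≤ ∫⁻ y, h y := by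
    have h1 : ∀ y ∈ (ball x 1)ᶜ, F (x - y) * h y ≤ h y := by
      intro y hy
      have hxy : (1:ℝ) ≤ ‖x - y‖ := by
        rw [Set.mem_compl_iff, mem_ball] at hy
        rw [← dist_eq_norm, dist_comm]
        exact not_lt.mp hy
      have h1d : ((1:ℝ) - d) ≤ 0 := by
        have h2d : (2:ℝ) ≤ (d:ℝ) := by exact_mod_cast hd
        linarith
      have : F (x - y) ≤ 1 := by
        simp only [hF]
        calc ENNReal.ofReal (‖x - y‖ ^ ((1:ℝ) - d))
            ≤ ENNReal.ofReal 1 := ENNReal.ofReal_le_ofReal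
              (Real.rpow_le_one_of_one_le_of_nonpos hxy h1d)
          _ = 1 := ENNReal.ofReal_one
      calc F (x - y) * h y ≤ 1 * h y := mul_le_mul_left this _
        _ = h y := one_mul _
    calc ∫⁻ y in (ball x 1)ᶜ, F (x - y) * h y ≤ ∫⁻ y in (ball x 1)ᶜ, h y :=
          setLIntegral_mono' measurableSet_ball.compl h1
      _ ≤ ∫⁻ y, h y := setLIntegral_le_lintegral _ _
  calc ∫⁻ y, h y * (‖gradNewton d (x - y)‖₊ : ℝ≥0∞)
      = ∫⁻ y, cE⁻¹ * (F (x - y) * h y) := lintegral_congr hpt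
    _ = cE⁻¹ * ∫⁻ y, F (x - y) * h y := lintegral_const_mul' _ _ hinvt
    _ ≤ cE⁻¹ * ((∫⁻ u in ball (0:E d) 1, F u) * M + ∫⁻ y, h y) := by
        refine mul_le_mul_right ?_ _
        rw [← lintegral_add_compl (fun y => F (x - y) * h y)
          (measurableSet_ball : MeasurableSet (ball x 1))]
        exact add_le_add hnear hfar

/-- Pointwise Cauchy–Schwarz bound for the difference of densities. -/
lemma cs_pointwise (g₁ g₂ : E d → ℂ) (hg₁ : Measurable g₁) (hg₂ : Measurable g₂)
    (P₁t : (∫⁻ w, ENNReal.ofReal (‖g₁ w‖ ^ (2:ℝ))) ≠ ⊤)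
    (P₂t : (∫⁻ w, ENNReal.ofReal (‖g₂ w‖ ^ (2:ℝ))) ≠ ⊤) :
    ENNReal.ofReal ‖(∫ w, ‖g₂ w‖ ^ 2) - (∫ w, ‖g₁ w‖ ^ 2)‖ ≤
      ((∫⁻ w, ENNReal.ofReal (‖g₁ w‖ ^ (2:ℝ))) ^ ((1:ℝ)/2) +
       (∫⁻ w, ENNReal.ofReal (‖g₂ w‖ ^ (2:ℝ))) ^ ((1:ℝ)/2)) *
      (∫⁻ w, ENNReal.ofReal (‖g₁ w - g₂ w‖ ^ (2:ℝ))) ^ ((1:ℝ)/2) := by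
  have hsq : ∀ c : ℝ, c ^ (2:ℝ) = c ^ (2:ℕ) := fun c => by
    rw [← Real.rpow_natCast c 2]
    norm_num
  -- identification of the Bochner integrals
  have hint : ∀ (g : E d → ℂ), Measurable g →
      ∫ w, ‖g w‖ ^ 2 = (∫⁻ w, ENNReal.ofReal (‖g w‖ ^ (2:ℝ))).toReal := by
    intro g hg
    rw [integral_eq_lintegral_of_nonneg_ae (ae_of_all _ fun w => by positivity)
      ((hg.norm.pow_const 2).aestronglyMeasurable)]
    congr 1
    refine lintegral_congr fun w => ?_
    rw [hsq]
  -- the main quadratic estimate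
  have hmain : ∀ (u v : E d → ℂ), Measurable u → Measurable v →
      (∫⁻ w, ENNReal.ofReal (‖v w‖ ^ (2:ℝ))) ≤ (∫⁻ w, ENNReal.ofReal (‖u w‖ ^ (2:ℝ))) +
        ((∫⁻ w, ENNReal.ofReal (‖u w‖ ^ (2:ℝ))) ^ ((1:ℝ)/2) +
         (∫⁻ w, ENNReal.ofReal (‖v w‖ ^ (2:ℝ))) ^ ((1:ℝ)/2)) *
        (∫⁻ w, ENNReal.ofReal (‖u w - v w‖ ^ (2:ℝ))) ^ ((1:ℝ)/2) := by
    intro u v hu hv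
    have hptw : ∀ w, ENNReal.ofReal (‖v w‖ ^ (2:ℝ)) ≤
        ENNReal.ofReal (‖u w‖ ^ (2:ℝ)) +
          ENNReal.ofReal ‖u w - v w‖ * (ENNReal.ofReal ‖u w‖ + ENNReal.ofReal ‖v w‖) := by
      intro w
      rw [← ENNReal.ofReal_add (norm_nonneg _) (norm_nonneg _),
        ← ENNReal.ofReal_mul (norm_nonneg _),
        ← ENNReal.ofReal_add (by positivity) (by positivity)]
      apply ENNReal.ofReal_le_ofReal
      rw [hsq, hsq]
      have h1 : ‖v w‖ - ‖u w‖ ≤ ‖u w - v w‖ := by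
        have := abs_norm_sub_norm_le (v w) (u w)
        rw [norm_sub_rev] at this
        calc ‖v w‖ - ‖u w‖ ≤ |‖v w‖ - ‖u w‖| := le_abs_self _
          _ ≤ ‖u w - v w‖ := this
      nlinarith [mul_le_mul_of_nonneg_right h1
          (add_nonneg (norm_nonneg (u w)) (norm_nonneg (v w))),
        norm_nonneg (u w), norm_nonneg (v w), norm_nonneg (u w - v w)]
    have hhold : ∫⁻ w, ENNReal.ofReal ‖u w - v w‖ *
          (ENNReal.ofReal ‖u w‖ + ENNReal.ofReal ‖v w‖) ≤
        ((∫⁻ w, ENNReal.ofReal (‖u w‖ ^ (2:ℝ))) ^ ((1:ℝ)/2) +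
         (∫⁻ w, ENNReal.ofReal (‖v w‖ ^ (2:ℝ))) ^ ((1:ℝ)/2)) *
        (∫⁻ w, ENNReal.ofReal (‖u w - v w‖ ^ (2:ℝ))) ^ ((1:ℝ)/2) := by
      have hH := ENNReal.lintegral_mul_le_Lp_mul_Lq (volume : Measure (E d))
        (p := 2) (q := 2) ⟨by norm_num, by norm_num, by norm_num⟩
        ((hu.sub hv).norm.ennreal_ofReal.aemeasurable)
        ((hu.norm.ennreal_ofReal.add hv.norm.ennreal_ofReal).aemeasurable)
      have hMink := ENNReal.lintegral_Lp_add_le (p := 2) (μ := (volume : Measure (E d)))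
        (hu.norm.ennreal_ofReal.aemeasurable) (hv.norm.ennreal_ofReal.aemeasurable)
        (by norm_num : (1:ℝ) ≤ 2)
      have hofr : ∀ (t : ℝ), 0 ≤ t → ENNReal.ofReal t ^ (2:ℝ) = ENNReal.ofReal (t ^ (2:ℝ)) :=
        fun t ht => ENNReal.ofReal_rpow_of_nonneg ht (by norm_num)
      calc ∫⁻ w, ENNReal.ofReal ‖u w - v w‖ * (ENNReal.ofReal ‖u w‖ + ENNReal.ofReal ‖v w‖)
          ≤ (∫⁻ w, ENNReal.ofReal ‖u w - v w‖ ^ (2:ℝ)) ^ (1/(2:ℝ)) *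
            (∫⁻ w, (ENNReal.ofReal ‖u w‖ + ENNReal.ofReal ‖v w‖) ^ (2:ℝ)) ^ (1/(2:ℝ)) := hH
        _ ≤ (∫⁻ w, ENNReal.ofReal (‖u w - v w‖ ^ (2:ℝ))) ^ ((1:ℝ)/2) *
            (((∫⁻ w, ENNReal.ofReal ‖u w‖ ^ (2:ℝ)) ^ (1/(2:ℝ))) +
             ((∫⁻ w, ENNReal.ofReal ‖v w‖ ^ (2:ℝ)) ^ (1/(2:ℝ)))) := by
            refine mul_le_mul' (le_of_eq ?_) hMink
            congr 1
            exact lintegral_congr fun w => hofr _ (norm_nonneg _)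
        _ = ((∫⁻ w, ENNReal.ofReal (‖u w‖ ^ (2:ℝ))) ^ ((1:ℝ)/2) +
             (∫⁻ w, ENNReal.ofReal (‖v w‖ ^ (2:ℝ))) ^ ((1:ℝ)/2)) *
            (∫⁻ w, ENNReal.ofReal (‖u w - v w‖ ^ (2:ℝ))) ^ ((1:ℝ)/2) := by
            have e1 : (∫⁻ w, ENNReal.ofReal ‖u w‖ ^ (2:ℝ))
                = ∫⁻ w, ENNReal.ofReal (‖u w‖ ^ (2:ℝ)) :=
              lintegral_congr fun w => hofr _ (norm_nonneg _)
            have e2 : (∫⁻ w, ENNReal.ofReal ‖v w‖ ^ (2:ℝ))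
                = ∫⁻ w, ENNReal.ofReal (‖v w‖ ^ (2:ℝ)) :=
              lintegral_congr fun w => hofr _ (norm_nonneg _)
            rw [e1, e2, mul_comm]
    calc (∫⁻ w, ENNReal.ofReal (‖v w‖ ^ (2:ℝ)))
        ≤ ∫⁻ w, (ENNReal.ofReal (‖u w‖ ^ (2:ℝ)) +
            ENNReal.ofReal ‖u w - v w‖ * (ENNReal.ofReal ‖u w‖ + ENNReal.ofReal ‖v w‖)) :=
          lintegral_mono hptw
      _ = (∫⁻ w, ENNReal.ofReal (‖u w‖ ^ (2:ℝ))) +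
          ∫⁻ w, ENNReal.ofReal ‖u w - v w‖ * (ENNReal.ofReal ‖u w‖ + ENNReal.ofReal ‖v w‖) :=
          lintegral_add_left ((hu.norm.pow_const _).ennreal_ofReal) _
      _ ≤ (∫⁻ w, ENNReal.ofReal (‖u w‖ ^ (2:ℝ))) +
          ((∫⁻ w, ENNReal.ofReal (‖u w‖ ^ (2:ℝ))) ^ ((1:ℝ)/2) +
           (∫⁻ w, ENNReal.ofReal (‖v w‖ ^ (2:ℝ))) ^ ((1:ℝ)/2)) *
          (∫⁻ w, ENNReal.ofReal (‖u w - v w‖ ^ (2:ℝ))) ^ ((1:ℝ)/2) := add_le_add_right hhold _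
  -- package into an absolute-value bound
  set P₁ := ∫⁻ w, ENNReal.ofReal (‖g₁ w‖ ^ (2:ℝ)) with hP₁
  set P₂ := ∫⁻ w, ENNReal.ofReal (‖g₂ w‖ ^ (2:ℝ)) with hP₂
  set R := (P₁ ^ ((1:ℝ)/2) + P₂ ^ ((1:ℝ)/2)) *
      (∫⁻ w, ENNReal.ofReal (‖g₁ w - g₂ w‖ ^ (2:ℝ))) ^ ((1:ℝ)/2) with hR
  have h21 : P₂ - P₁ ≤ R := by
    rw [tsub_le_iff_right, add_comm]
    exact hmain g₁ g₂ hg₁ hg₂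
  have h12 : P₁ - P₂ ≤ R := by
    rw [tsub_le_iff_right, add_comm]
    have := hmain g₂ g₁ hg₂ hg₁
    calc P₁ ≤ P₂ + (P₂ ^ ((1:ℝ)/2) + P₁ ^ ((1:ℝ)/2)) *
          (∫⁻ w, ENNReal.ofReal (‖g₂ w - g₁ w‖ ^ (2:ℝ))) ^ ((1:ℝ)/2) := this
      _ = P₂ + R := by
          rw [hR, add_comm (P₂ ^ ((1:ℝ)/2))]
          congr 3
          exact lintegral_congr fun w => by rw [norm_sub_rev]
  rw [hint g₁ hg₁, hint g₂ hg₂, ← hP₁, ← hP₂, Real.norm_eq_abs]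
  rcases le_total P₁ P₂ with hle | hle
  · have habs : |P₂.toReal - P₁.toReal| = (P₂ - P₁).toReal := by
      rw [ENNReal.toReal_sub_of_le hle P₂t, abs_of_nonneg]
      have := ENNReal.toReal_mono P₂t hle
      linarith
    rw [habs]
    calc ENNReal.ofReal (P₂ - P₁).toReal ≤ P₂ - P₁ := ENNReal.ofReal_toReal_le
      _ ≤ R := h21
  · have habs : |P₂.toReal - P₁.toReal| = (P₁ - P₂).toReal := by
      rw [ENNReal.toReal_sub_of_le hle P₁t, abs_of_nonpos]
      · ring
      · have := ENNReal.toReal_mono P₁t hle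
        linarith
    rw [habs]
    calc ENNReal.ofReal (P₁ - P₂).toReal ≤ P₁ - P₂ := ENNReal.ofReal_toReal_le
      _ ≤ R := h12

end
end Statement14Aux

/-- Lipschitz estimate for the force `F_i = −∇Γ * ρ_i`: there is `C = C(d,κ) > 0` with
`‖F₁ − F₂‖_{L^∞} ≤ C (‖α₁‖_{A^{κ,2}} + ‖α₂‖_{A^{κ,2}}) ‖α₁ − α₂‖_{A^{κ,2}}`. -/
theorem statement14 (d : ℕ) (hd : 3 ≤ d) (κ : ℝ) (hκ : 2 * (d : ℝ) ≤ κ) :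
    ∃ C > 0, ∀ α₁ α₂ : E d × E d → ℂ, Measurable α₁ → Measurable α₂ →
      Anorm κ 2 α₁ < ⊤ → Anorm κ 2 α₂ < ⊤ → ∀ x : E d,
      ENNReal.ofReal
          ‖(-∫ y : E d, (∫ w : E d, ‖α₁ (y, w)‖ ^ 2) • gradNewton d (x - y)) -
            (-∫ y : E d, (∫ w : E d, ‖α₂ (y, w)‖ ^ 2) • gradNewton d (x - y))‖ ≤
        ENNReal.ofReal C * (Anorm κ 2 α₁ + Anorm κ 2 α₂) * Anorm κ 2 (α₁ - α₂) := by
  classical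
  have hd2 : 2 ≤ d := by omega
  have hκ0 : (0:ℝ) ≤ κ := by
    have hd0 : (0:ℝ) ≤ 2 * (d:ℝ) := by positivity
    linarith
  set v := volume (Metric.ball (0:E d) 1) with hv
  have hv0 : v ≠ 0 := (Metric.measure_ball_pos volume _ one_pos).ne'
  have hvt : v ≠ ⊤ := MeasureTheory.measure_ball_lt_top.ne
  set K : ℝ≥0∞ := v⁻¹ * ENNReal.ofReal 2 ^ κ with hK
  have hKt : K ≠ ⊤ := by
    apply ENNReal.mul_ne_top (ENNReal.inv_ne_top.mpr hv0)
    simp [ENNReal.rpow_eq_top_iff]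
  set N := ∫⁻ u in Metric.ball (0:E d) 1, ENNReal.ofReal (‖u‖ ^ ((1:ℝ)-d)) with hN
  have hNt : N ≠ ⊤ := (Statement14Aux.kernel_finite hd2).ne
  set cE := ENNReal.ofReal ((d : ℝ) * v.toReal) with hcE
  have hcE0 : cE ≠ 0 := by
    rw [hcE]
    simp only [ne_eq, ENNReal.ofReal_eq_zero, not_le]
    apply mul_pos
    · have : 0 < d := by omega
      exact_mod_cast this
    · exact ENNReal.toReal_pos hv0 hvt
  set C' : ℝ≥0∞ := cE⁻¹ * (N * K + 1) with hC'
  have hC't : C' ≠ ⊤ := by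
    apply ENNReal.mul_ne_top (ENNReal.inv_ne_top.mpr hcE0)
    exact ENNReal.add_ne_top.mpr ⟨ENNReal.mul_ne_top hNt hKt, ENNReal.one_ne_top⟩
  refine ⟨C'.toReal + 1, by positivity, ?_⟩
  intro α₁ α₂ hm₁ hm₂ hA₁ hA₂ x
  -- helper identities
  have hsqr : ∀ X : ℝ≥0∞, (X ^ ((1:ℝ)/2)) ^ (2:ℝ) = X := fun X => by
    rw [← ENNReal.rpow_mul]
    norm_num
  have hsq_le : ∀ {X A : ℝ≥0∞}, X ^ ((1:ℝ)/2) ≤ A → X ≤ A ^ (2:ℝ) := by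
    intro X A hXA
    calc X = (X ^ ((1:ℝ)/2)) ^ (2:ℝ) := (hsqr X).symm
      _ ≤ A ^ (2:ℝ) := ENNReal.rpow_le_rpow hXA (by norm_num)
  have hhalf : ∀ {X A : ℝ≥0∞}, X ≤ K * A ^ (2:ℝ) → X ^ ((1:ℝ)/2) ≤ K ^ ((1:ℝ)/2) * A := by
    intro X A hXA
    calc X ^ ((1:ℝ)/2) ≤ (K * A ^ (2:ℝ)) ^ ((1:ℝ)/2) :=
        ENNReal.rpow_le_rpow hXA (by norm_num)
      _ = K ^ ((1:ℝ)/2) * A := by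
        rw [ENNReal.mul_rpow_of_nonneg _ _ (by norm_num : (0:ℝ) ≤ 1/2), ← ENNReal.rpow_mul]
        norm_num
  -- fiberwise L² masses
  set P : (E d × E d → ℂ) → E d → ℝ≥0∞ := fun f y => ∫⁻ w, Statement14Aux.sq f (y, w) with hP
  have hPm : ∀ {f : E d × E d → ℂ}, Measurable f → Measurable (P f) := by
    intro f hf
    exact (Statement14Aux.measurable_sq hf).lintegral_prod_right'
  have hPle : ∀ {f : E d × E d → ℂ}, Measurable f → ∀ y,
      P f y ≤ K * (Anorm κ 2 f) ^ (2:ℝ) := by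
    intro f hf y
    exact Statement14Aux.slice_le κ hκ0 hf y
  have hPt : ∀ {f : E d × E d → ℂ}, Measurable f → Anorm κ 2 f < ⊤ → ∀ y, P f y ≠ ⊤ := by
    intro f hf hA y
    refine (lt_of_le_of_lt (hPle hf y) ?_).ne
    exact ENNReal.mul_lt_top hKt.lt_top (ENNReal.rpow_lt_top_of_nonneg (by norm_num) hA.ne)
  have hTon : ∀ {f : E d × E d → ℂ}, Measurable f →
      ∫⁻ y, P f y = ∫⁻ z, Statement14Aux.sq f z := by
    intro f hf
    rw [MeasureTheory.Measure.volume_eq_prod, lintegral_prod _ (Statement14Aux.measurable_sq hf).aemeasurable]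
  have hl2 : ∀ {f : E d × E d → ℂ}, Measurable f →
      (∫⁻ y, P f y) ^ ((1:ℝ)/2) ≤ Anorm κ 2 f := by
    intro f hf
    rw [hTon hf]
    exact Statement14Aux.l2_le κ hκ0 f
  -- identification of the Bochner density with the lintegral
  have hint : ∀ (f : E d × E d → ℂ), Measurable f → ∀ y,
      ∫ w, ‖f (y, w)‖ ^ 2 = (P f y).toReal := by
    intro f hf y
    have hmeas : AEStronglyMeasurable (fun w => ‖f (y, w)‖ ^ 2) (volume : Measure (E d)) :=
      ((hf.comp measurable_prodMk_left).norm.pow_const 2).aestronglyMeasurable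
    rw [integral_eq_lintegral_of_nonneg_ae (ae_of_all _ fun w => by positivity) hmeas]
    congr 1
    refine lintegral_congr fun w => ?_
    have hc : ∀ c : ℝ, c ^ (2:ℕ) = c ^ (2:ℝ) := fun c => by
      rw [← Real.rpow_natCast c 2]
      norm_num
    rw [hc]
    rfl
  have hρnn : ∀ (f : E d × E d → ℂ) (y : E d), (0:ℝ) ≤ ∫ w, ‖f (y, w)‖ ^ 2 :=
    fun f y => integral_nonneg fun w => by positivity
  have hofρ : ∀ (f : E d × E d → ℂ), Measurable f → Anorm κ 2 f < ⊤ → ∀ y,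
      ENNReal.ofReal (∫ w, ‖f (y, w)‖ ^ 2) = P f y := by
    intro f hf hA y
    rw [hint f hf y, ENNReal.ofReal_toReal (hPt hf hA y)]
  -- measurability of the kernel
  have hGrad : Measurable (gradNewton d) := by
    refine Measurable.smul (f := fun x : E d => (((d : ℝ) * (volume (Metric.ball (0 : E d) 1)).toReal) * ‖x‖ ^ (d : ℝ))⁻¹) ?_ measurable_id
    exact ((measurable_norm.pow_const _).const_mul _).inv
  have hGk : Measurable fun y => gradNewton d (x - y) :=
    hGrad.comp (measurable_const.sub measurable_id)
  -- integrability of the force integrands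
  have hInt : ∀ (f : E d × E d → ℂ), Measurable f → Anorm κ 2 f < ⊤ →
      Integrable (fun y => (∫ w, ‖f (y, w)‖ ^ 2) • gradNewton d (x - y)) := by
    intro f hf hA
    have hρm : Measurable fun y => ∫ w, ‖f (y, w)‖ ^ 2 := by
      have : StronglyMeasurable fun z : E d × E d => ‖f z‖ ^ 2 :=
        (hf.norm.pow_const 2).stronglyMeasurable
      exact this.integral_prod_right'.measurable
    refine ⟨(hρm.smul hGk).aestronglyMeasurable, ?_⟩
    rw [hasFiniteIntegral_def]
    have heq : ∀ y, ((‖(∫ w, ‖f (y, w)‖ ^ 2) • gradNewton d (x - y)‖₊ : ℝ≥0∞))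
        = P f y * (‖gradNewton d (x - y)‖₊ : ℝ≥0∞) := by
      intro y
      rw [nnnorm_smul, ENNReal.coe_mul, ← enorm_eq_nnnorm, Real.enorm_eq_ofReal (hρnn f y), hofρ f hf hA y]
    calc ∫⁻ y, (‖(∫ w, ‖f (y, w)‖ ^ 2) • gradNewton d (x - y)‖₊ : ℝ≥0∞)
        = ∫⁻ y, P f y * (‖gradNewton d (x - y)‖₊ : ℝ≥0∞) := lintegral_congr heq
      _ ≤ cE⁻¹ * (N * (⨆ y, P f y) + ∫⁻ y, P f y) := by
          have := Statement14Aux.conv_bound hd2 x (P f)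
          rw [← hv, ← hcE, ← hN] at this
          exact this
      _ < ⊤ := by
          apply ENNReal.mul_lt_top (ENNReal.inv_ne_top.mpr hcE0).lt_top
          apply ENNReal.add_lt_top.mpr
          constructor
          · apply ENNReal.mul_lt_top hNt.lt_top
            refine lt_of_le_of_lt (iSup_le fun y => hPle hf y) ?_
            exact ENNReal.mul_lt_top hKt.lt_top
              (ENNReal.rpow_lt_top_of_nonneg (by norm_num) hA.ne)
          · refine lt_of_le_of_lt (hsq_le (hl2 hf)) ?_
            exact ENNReal.rpow_lt_top_of_nonneg (by norm_num) hA.ne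
  -- abbreviations
  set A₁ := Anorm κ 2 α₁ with hA₁d
  set A₂ := Anorm κ 2 α₂ with hA₂d
  set D := Anorm κ 2 (α₁ - α₂) with hDd
  have hmd : Measurable (α₁ - α₂) := hm₁.sub hm₂
  set a₁ : E d → ℝ≥0∞ := fun y => (P α₁ y) ^ ((1:ℝ)/2) with ha₁
  set a₂ : E d → ℝ≥0∞ := fun y => (P α₂ y) ^ ((1:ℝ)/2) with ha₂
  set b : E d → ℝ≥0∞ := fun y => (P (α₁ - α₂) y) ^ ((1:ℝ)/2) with hb
  set h : E d → ℝ≥0∞ := fun y => (a₁ y + a₂ y) * b y with hh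
  -- pointwise Cauchy–Schwarz
  have hcs : ∀ y, ENNReal.ofReal
      ‖(∫ w, ‖α₂ (y, w)‖ ^ 2) - (∫ w, ‖α₁ (y, w)‖ ^ 2)‖ ≤ h y := by
    intro y
    have hthis := Statement14Aux.cs_pointwise (fun w => α₁ (y, w)) (fun w => α₂ (y, w))
      (hm₁.comp measurable_prodMk_left) (hm₂.comp measurable_prodMk_left)
      (hPt hm₁ hA₁ y) (hPt hm₂ hA₂ y)
    have hdiff : (∫⁻ w, ENNReal.ofReal (‖α₁ (y, w) - α₂ (y, w)‖ ^ (2:ℝ)))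
        = P (α₁ - α₂) y := by
      refine lintegral_congr fun w => ?_
      simp [Statement14Aux.sq]
    calc ENNReal.ofReal ‖(∫ w, ‖α₂ (y, w)‖ ^ 2) - (∫ w, ‖α₁ (y, w)‖ ^ 2)‖
        ≤ ((P α₁ y) ^ ((1:ℝ)/2) + (P α₂ y) ^ ((1:ℝ)/2)) *
          (∫⁻ w, ENNReal.ofReal (‖α₁ (y, w) - α₂ (y, w)‖ ^ (2:ℝ))) ^ ((1:ℝ)/2) := hthis
      _ = h y := by rw [hdiff]
  -- the main chain of estimates
  have hsup : (⨆ y, h y) ≤ K * ((A₁ + A₂) * D) := by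
    refine iSup_le fun y => ?_
    have h1 : a₁ y ≤ K ^ ((1:ℝ)/2) * A₁ := hhalf (hPle hm₁ y)
    have h2 : a₂ y ≤ K ^ ((1:ℝ)/2) * A₂ := hhalf (hPle hm₂ y)
    have h3 : b y ≤ K ^ ((1:ℝ)/2) * D := hhalf (hPle hmd y)
    calc h y ≤ (K ^ ((1:ℝ)/2) * A₁ + K ^ ((1:ℝ)/2) * A₂) * (K ^ ((1:ℝ)/2) * D) :=
        mul_le_mul' (add_le_add h1 h2) h3
      _ = (K ^ ((1:ℝ)/2) * K ^ ((1:ℝ)/2)) * ((A₁ + A₂) * D) := by ring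
      _ = K * ((A₁ + A₂) * D) := by
          rw [← ENNReal.rpow_add_of_nonneg _ _ (by norm_num : (0:ℝ) ≤ 1/2)
            (by norm_num : (0:ℝ) ≤ 1/2)]
          norm_num
  have hinth : ∫⁻ y, h y ≤ (A₁ + A₂) * D := by
    have ham : ∀ {f : E d × E d → ℂ}, Measurable f →
        Measurable fun y => (P f y) ^ ((1:ℝ)/2) := by
      intro f hf
      exact (hPm hf).pow_const _
    have hH := ENNReal.lintegral_mul_le_Lp_mul_Lq (volume : Measure (E d))
      (p := 2) (q := 2) (f := fun y => a₁ y + a₂ y) (g := b)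
      ⟨by norm_num, by norm_num, by norm_num⟩
      ((ham hm₁).add (ham hm₂)).aemeasurable ((ham hmd)).aemeasurable
    have hMink := ENNReal.lintegral_Lp_add_le (p := 2) (μ := (volume : Measure (E d)))
      (f := a₁) (g := a₂) (ham hm₁).aemeasurable (ham hm₂).aemeasurable
      (by norm_num : (1:ℝ) ≤ 2)
    have e1 : ∀ {f : E d × E d → ℂ} (hf : Measurable f),
        (∫⁻ y, ((P f y) ^ ((1:ℝ)/2)) ^ (2:ℝ)) ^ (1/(2:ℝ)) ≤ Anorm κ 2 f := by
      intro f hf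
      have : (∫⁻ y, ((P f y) ^ ((1:ℝ)/2)) ^ (2:ℝ)) = ∫⁻ y, P f y :=
        lintegral_congr fun y => hsqr _
      rw [this]
      exact hl2 hf
    calc ∫⁻ y, h y ≤ (∫⁻ y, (a₁ y + a₂ y) ^ (2:ℝ)) ^ (1/(2:ℝ)) *
          (∫⁻ y, b y ^ (2:ℝ)) ^ (1/(2:ℝ)) := hH
      _ ≤ ((∫⁻ y, a₁ y ^ (2:ℝ)) ^ (1/(2:ℝ)) + (∫⁻ y, a₂ y ^ (2:ℝ)) ^ (1/(2:ℝ))) *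
          (∫⁻ y, b y ^ (2:ℝ)) ^ (1/(2:ℝ)) := mul_le_mul_left hMink _
      _ ≤ (A₁ + A₂) * D :=
          mul_le_mul' (add_le_add (e1 hm₁) (e1 hm₂)) (e1 hmd)
  -- rewrite the left-hand side
  have hI₁ := hInt α₁ hm₁ hA₁
  have hI₂ := hInt α₂ hm₂ hA₂
  rw [neg_sub_neg, ← integral_sub hI₂ hI₁]
  calc ENNReal.ofReal ‖∫ y, ((∫ w, ‖α₂ (y, w)‖ ^ 2) • gradNewton d (x - y) -
        (∫ w, ‖α₁ (y, w)‖ ^ 2) • gradNewton d (x - y))‖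
      ≤ ∫⁻ y, (‖(∫ w, ‖α₂ (y, w)‖ ^ 2) • gradNewton d (x - y) -
        (∫ w, ‖α₁ (y, w)‖ ^ 2) • gradNewton d (x - y)‖₊ : ℝ≥0∞) := by
        rw [ofReal_norm]
        exact enorm_integral_le_lintegral_enorm _
    _ = ∫⁻ y, ENNReal.ofReal ‖(∫ w, ‖α₂ (y, w)‖ ^ 2) - (∫ w, ‖α₁ (y, w)‖ ^ 2)‖ *
          (‖gradNewton d (x - y)‖₊ : ℝ≥0∞) := by
        refine lintegral_congr fun y => ?_
        rw [← sub_smul, nnnorm_smul, ENNReal.coe_mul, ← enorm_eq_nnnorm, ← ofReal_norm]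
    _ ≤ ∫⁻ y, h y * (‖gradNewton d (x - y)‖₊ : ℝ≥0∞) :=
        lintegral_mono fun y => mul_le_mul_left (hcs y) _
    _ ≤ cE⁻¹ * (N * (⨆ y, h y) + ∫⁻ y, h y) := by
        have hcb := Statement14Aux.conv_bound hd2 x h
        rw [← hv, ← hcE, ← hN] at hcb
        exact hcb
    _ ≤ cE⁻¹ * (N * (K * ((A₁ + A₂) * D)) + (A₁ + A₂) * D) :=
        mul_le_mul_right (add_le_add (mul_le_mul_right hsup _) hinth) _
    _ = C' * ((A₁ + A₂) * D) := by rw [hC']; ring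
    _ ≤ ENNReal.ofReal (C'.toReal + 1) * ((A₁ + A₂) * D) := by
        refine mul_le_mul_left ?_ _
        calc C' = ENNReal.ofReal C'.toReal := (ENNReal.ofReal_toReal hC't).symm
          _ ≤ ENNReal.ofReal (C'.toReal + 1) :=
            ENNReal.ofReal_le_ofReal (by linarith [ENNReal.toReal_nonneg (a := C')])
    _ = ENNReal.ofReal (C'.toReal + 1) * (A₁ + A₂) * D := by rw [mul_assoc]
end

section
/- Let d ≥ 1, κ ≥ 2d, let α : ℝ^{2d} → ℂ be measurable with ‖α‖_{A^{κ,2}} < ∞, let t ≥ 0 and D ≥ 0, and let Ψ : ℝ^{2d} → ℝ^{2d} be a measurable map satisfying |Ψ(x,v) − (x − t v, v)| ≤ D for all (x,v) ∈ ℝ^{2d}. Then ‖α ∘ Ψ‖_{A^{κ,2}} ≤ (1 + t + D)^{κ/2} ‖α‖_{A^{κ,2}}. -/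
open MeasureTheory
open scoped ENNReal NNReal

/-- Composition estimate: if `Ψ` stays within distance `D` of the backward free flow
`(x,v) ↦ (x − tv, v)`, then `‖α ∘ Ψ‖_{A^{κ,2}} ≤ (1+t+D)^{κ/2} ‖α‖_{A^{κ,2}}`. -/
theorem statement18 (d : ℕ) (hd : 1 ≤ d) (κ : ℝ) (hκ : 2 * (d : ℝ) ≤ κ)
    (α : E d × E d → ℂ) (hα : Measurable α) (hfin : Anorm κ 2 α < ⊤)
    (t D : ℝ) (ht : 0 ≤ t) (hD : 0 ≤ D)
    (Ψ : E d × E d → E d × E d) (hΨm : Measurable Ψ)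
    (hΨ : ∀ z : E d × E d, ‖Ψ z - (z.1 - t • z.2, z.2)‖ ≤ D) :
    Anorm κ 2 (α ∘ Ψ) ≤ ENNReal.ofReal ((1 + t + D) ^ (κ / 2)) * Anorm κ 2 α := by
  have hκ2 : (0:ℝ) ≤ κ / 2 := by
    have : (1:ℝ) ≤ (d:ℝ) := by exact_mod_cast hd
    linarith
  -- the backward free flow as a measurable equivalence
  have hmT : Measurable (fun z : E d × E d => (z.1 - t • z.2, z.2)) :=
    (measurable_fst.sub (measurable_snd.const_smul t)).prodMk measurable_snd
  have hmTinv : Measurable (fun z : E d × E d => (z.1 + t • z.2, z.2)) :=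
    (measurable_fst.add (measurable_snd.const_smul t)).prodMk measurable_snd
  let e : (E d × E d) ≃ᵐ (E d × E d) :=
  { toFun := fun z => (z.1 - t • z.2, z.2)
    invFun := fun z => (z.1 + t • z.2, z.2)
    left_inv := fun z => by simp
    right_inv := fun z => by simp
    measurable_toFun := hmT
    measurable_invFun := hmTinv }
  -- it is measure preserving
  have hswap : MeasurePreserving (Prod.swap : E d × E d → E d × E d)
      ((volume : Measure (E d)).prod volume) ((volume : Measure (E d)).prod volume) :=
    Measure.measurePreserving_swap
  have hskew : MeasurePreserving (fun p : E d × E d => (p.1, p.2 - t • p.1))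
      ((volume : Measure (E d)).prod volume) ((volume : Measure (E d)).prod volume) := by
    refine (MeasurePreserving.id volume).skew_product (g := fun v x => x - t • v)
      (measurable_snd.sub (measurable_fst.const_smul t)) (Filter.Eventually.of_forall ?_)
    intro a
    simpa [sub_eq_add_neg] using map_add_right_eq_self (volume : Measure (E d)) (-(t • a))
  have hT : MeasurePreserving (fun z : E d × E d => (z.1 - t • z.2, z.2))
      (volume : Measure (E d × E d)) volume := by
    rw [Measure.volume_eq_prod]
    exact hswap.comp (hskew.comp hswap)
  have hmap : Measure.map (⇑e) (volume : Measure (E d × E d)) = volume := hT.map_eq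
  -- main estimate, one radius at a time
  unfold Anorm
  refine iSup_le fun R => ?_
  set R' : ℝ := (1 + t) * (R : ℝ) + D with hR'def
  have hR'0 : 0 ≤ R' := by positivity
  set R'' : ℝ≥0 := ⟨R', hR'0⟩ with hR''def
  -- pointwise bound on the sup
  have hpt : ∀ z : E d × E d,
      (⨆ w ∈ Metric.closedBall (0 : E d × E d) (R : ℝ),
        ENNReal.ofReal (‖(α ∘ Ψ) (z + w)‖ ^ (2:ℝ))) ≤
      ⨆ w ∈ Metric.closedBall (0 : E d × E d) ((R'' : ℝ)),
        ENNReal.ofReal (‖α (e z + w)‖ ^ (2:ℝ)) := by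
    intro z
    refine iSup₂_le fun w hw => ?_
    rw [Metric.mem_closedBall, dist_zero_right] at hw
    have hw' : Ψ (z + w) - e z ∈ Metric.closedBall (0 : E d × E d) ((R'' : ℝ)) := by
      rw [Metric.mem_closedBall, dist_zero_right]
      have hdecomp : Ψ (z + w) - e z
          = (Ψ (z + w) - ((z + w).1 - t • (z + w).2, (z + w).2))
            + (w.1 - t • w.2, w.2) := by
        show _ = _ + (_ : E d × E d)
        have h1 : ((z + w).1 - t • (z + w).2, (z + w).2) =
            ((z.1 - t • z.2) + (w.1 - t • w.2), z.2 + w.2) := by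
          simp [Prod.ext_iff, smul_add]
          abel
        rw [h1]
        show Ψ (z + w) - (z.1 - t • z.2, z.2) = _
        simp [Prod.ext_iff, Prod.sub_def, Prod.add_def]
        constructor <;> abel
      have hTw : ‖((w.1 - t • w.2, w.2) : E d × E d)‖ ≤ (1 + t) * (R : ℝ) := by
        have h1 : ‖w.1‖ ≤ (R : ℝ) := (norm_fst_le w).trans hw
        have h2 : ‖w.2‖ ≤ (R : ℝ) := (norm_snd_le w).trans hw
        rw [Prod.norm_def]
        refine max_le ?_ ?_
        swap
        · show ‖w.2‖ ≤ (1 + t) * (R : ℝ)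
          nlinarith [norm_nonneg w.2, R.2]
        calc ‖w.1 - t • w.2‖ ≤ ‖w.1‖ + ‖t • w.2‖ := norm_sub_le _ _
          _ = ‖w.1‖ + t * ‖w.2‖ := by rw [norm_smul, Real.norm_eq_abs, abs_of_nonneg ht]
          _ ≤ (R : ℝ) + t * (R : ℝ) := by
              have := mul_le_mul_of_nonneg_left h2 ht
              linarith
          _ = (1 + t) * (R : ℝ) := by ring
      calc ‖Ψ (z + w) - e z‖
          ≤ ‖Ψ (z + w) - ((z + w).1 - t • (z + w).2, (z + w).2)‖
            + ‖((w.1 - t • w.2, w.2) : E d × E d)‖ := by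
            rw [hdecomp]; exact norm_add_le _ _
        _ ≤ D + (1 + t) * (R : ℝ) := add_le_add (hΨ (z + w)) hTw
        _ = (R'' : ℝ) := by simp [hR''def, hR'def]; show _ = (1 + t) * (R:ℝ) + D; ring
    have hval : (α ∘ Ψ) (z + w) = α (e z + (Ψ (z + w) - e z)) := by
      simp [Function.comp]
    rw [hval]
    exact le_iSup₂_of_le _ hw' le_rfl
  -- shorthand for the integrand at radius R'
  set F : (E d × E d) → ℝ≥0∞ := fun z =>
    ⨆ w ∈ Metric.closedBall (0 : E d × E d) ((R'' : ℝ)),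
      ENNReal.ofReal (‖α (z + w)‖ ^ (2:ℝ)) with hF
  -- change of variables
  have hcov : (∫⁻ z, F (e z)) = ∫⁻ z, F z := by
    rw [← lintegral_map_equiv F e, hmap]
  -- coefficient comparison
  have hcoef : (ENNReal.ofReal (1 + (R : ℝ))) ^ (-(κ / 2)) ≤
      ENNReal.ofReal ((1 + t + D) ^ (κ / 2)) *
        (ENNReal.ofReal (1 + (R'' : ℝ))) ^ (-(κ / 2)) := by
    set a := ENNReal.ofReal (1 + (R : ℝ)) with ha
    set b := ENNReal.ofReal (1 + (R'' : ℝ)) with hb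
    set c := ENNReal.ofReal (1 + t + D) with hc
    have hba : b ≤ c * a := by
      rw [ha, hb, hc, ← ENNReal.ofReal_mul (by linarith)]
      apply ENNReal.ofReal_le_ofReal
      have hRpos : (0:ℝ) ≤ (R : ℝ) := R.2
      have : (1 + t + D) * (1 + (R:ℝ)) = 1 + (1+t)*(R:ℝ) + D + (t + D * (R:ℝ)) := by ring
      rw [this]
      have : (0:ℝ) ≤ t + D * (R:ℝ) := by positivity
      simp only [hR''def, NNReal.coe_mk, hR'def]
      show 1 + ((1 + t) * (R:ℝ) + D) ≤ _
      linarith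
    have hBA : b ^ (κ/2) ≤ ENNReal.ofReal ((1 + t + D) ^ (κ / 2)) * a ^ (κ/2) := by
      calc b ^ (κ/2) ≤ (c * a) ^ (κ/2) := ENNReal.rpow_le_rpow hba hκ2
        _ = c ^ (κ/2) * a ^ (κ/2) := ENNReal.mul_rpow_of_nonneg _ _ hκ2
        _ = ENNReal.ofReal ((1 + t + D) ^ (κ / 2)) * a ^ (κ/2) := by
            rw [hc, ENNReal.ofReal_rpow_of_pos (by linarith)]
    set C := ENNReal.ofReal ((1 + t + D) ^ (κ / 2)) with hC
    have hA0 : a ^ (κ/2) ≠ 0 := by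
      apply ne_of_gt
      apply ENNReal.rpow_pos _ ENNReal.ofReal_ne_top
      exact ENNReal.ofReal_pos.2 (by have : (0:ℝ) ≤ (R:ℝ) := R.2; linarith)
    have hAtop : a ^ (κ/2) ≠ ⊤ := ENNReal.rpow_ne_top_of_nonneg hκ2 ENNReal.ofReal_ne_top
    have hB0 : b ^ (κ/2) ≠ 0 := by
      apply ne_of_gt
      apply ENNReal.rpow_pos _ ENNReal.ofReal_ne_top
      exact ENNReal.ofReal_pos.2 (by have : (0:ℝ) ≤ (R'':ℝ) := R''.2; linarith)
    have hBtop : b ^ (κ/2) ≠ ⊤ := ENNReal.rpow_ne_top_of_nonneg hκ2 ENNReal.ofReal_ne_top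
    rw [ENNReal.rpow_neg, ENNReal.rpow_neg]
    have h1 : b ^ (κ/2) * (a ^ (κ/2))⁻¹ ≤ C := by
      have h := mul_le_mul_left hBA (a ^ (κ/2))⁻¹
      rwa [mul_assoc, ENNReal.mul_inv_cancel hA0 hAtop, mul_one] at h
    calc (a ^ (κ/2))⁻¹ = (b ^ (κ/2))⁻¹ * (b ^ (κ/2) * (a ^ (κ/2))⁻¹) := by
          rw [← mul_assoc, ENNReal.inv_mul_cancel hB0 hBtop, one_mul]
      _ ≤ (b ^ (κ/2))⁻¹ * C := mul_le_mul_right h1 _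
      _ = C * (b ^ (κ/2))⁻¹ := mul_comm _ _
  -- put everything together
  calc (ENNReal.ofReal (1 + (R : ℝ))) ^ (-(κ / 2)) *
        (∫⁻ z, ⨆ w ∈ Metric.closedBall (0 : E d × E d) (R : ℝ),
          ENNReal.ofReal (‖(α ∘ Ψ) (z + w)‖ ^ (2:ℝ))) ^ (1 / (2:ℝ))
      ≤ (ENNReal.ofReal (1 + (R : ℝ))) ^ (-(κ / 2)) * (∫⁻ z, F (e z)) ^ (1 / (2:ℝ)) := by
        exact mul_le_mul_right (ENNReal.rpow_le_rpow (lintegral_mono hpt) (by norm_num)) _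
    _ = (ENNReal.ofReal (1 + (R : ℝ))) ^ (-(κ / 2)) * (∫⁻ z, F z) ^ (1 / (2:ℝ)) := by
        rw [hcov]
    _ ≤ (ENNReal.ofReal ((1 + t + D) ^ (κ / 2)) *
          (ENNReal.ofReal (1 + (R'' : ℝ))) ^ (-(κ / 2))) * (∫⁻ z, F z) ^ (1 / (2:ℝ)) :=
        mul_le_mul_left hcoef _
    _ = ENNReal.ofReal ((1 + t + D) ^ (κ / 2)) *
          ((ENNReal.ofReal (1 + (R'' : ℝ))) ^ (-(κ / 2)) * (∫⁻ z, F z) ^ (1 / (2:ℝ))) := by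
        rw [mul_assoc]
    _ ≤ ENNReal.ofReal ((1 + t + D) ^ (κ / 2)) *
          (⨆ S : NNReal, (ENNReal.ofReal (1 + (S : ℝ))) ^ (-(κ / 2)) *
            (∫⁻ z, ⨆ w ∈ Metric.closedBall (0 : E d × E d) (S : ℝ),
              ENNReal.ofReal (‖α (z + w)‖ ^ (2:ℝ))) ^ (1 / (2:ℝ))) := by
        exact mul_le_mul_right (le_iSup (fun S : NNReal =>
          (ENNReal.ofReal (1 + (S : ℝ))) ^ (-(κ / 2)) *
            (∫⁻ z, ⨆ w ∈ Metric.closedBall (0 : E d × E d) (S : ℝ),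
              ENNReal.ofReal (‖α (z + w)‖ ^ (2:ℝ))) ^ (1 / (2:ℝ))) R'') _
end

section
/- Let d ≥ 3, let I ⊆ ℝ be an open interval, and let α : I × ℝ^{2d} → ℂ be continuously differentiable. Assume that for every t ∈ I and x ∈ ℝ^d the integrals ρ(t,y) := ∫_{ℝ^d} |α(t,y,w)|² dw, F(t,x) := −∫_{ℝ^d} ∇Γ(x−y) ρ(t,y) dy, φ(t,y) := ∫_{ℝ^d} conj(α)(t,y,w) ∇_w α(t,y,w) dw, and K(t,x) := −∫_{ℝ^d} ∇Γ(x−y) · φ(t,y) dy converge absolutely, that Re K(t,x) = 0 for all (t,x), and that α satisfies the Hamiltonian Vlasov–Poisson equation ∂_t α(t,x,v) = −v · ∇_x α(t,x,v) − F(t,x) · ∇_v α(t,x,v) + K(t,x) α(t,x,v) on I × ℝ^{2d}. Then f := |α|² satisfies the classical Vlasov–Poisson equation ∂_t f(t,x,v) + v · ∇_x f(t,x,v) + F(t,x) · ∇_v f(t,x,v) = 0 on I × ℝ^{2d}. -/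
open MeasureTheory
open scoped ENNReal NNReal

/-- If `α` is a `C¹` solution of the Hamiltonian Vlasov–Poisson equation
`∂ₜα = −v·∇ₓα − F·∇ᵥα + K α` on an open interval `I` (with the force `F` and the
purely imaginary phase force `K` given by the Newtonian convolutions of the
density `ρ = ∫|α|² dv` and the phase density `φ = ∫ conj(α) ∇ᵥα dv`, all integrals
converging absolutely), then `f = |α|²` solves the classical Vlasov–Poisson equation
`∂ₜf + v·∇ₓf + F·∇ᵥf = 0` on `I × ℝ^{2d}`. -/
theorem statement19 (d : ℕ) (hd : 3 ≤ d)
    (I : Set ℝ) (hIopen : IsOpen I) (hIconn : I.OrdConnected)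
    (α : ℝ × (E d × E d) → ℂ)
    (hα : ContDiffOn ℝ 1 α (I ×ˢ (Set.univ : Set (E d × E d))))
    (ρ : ℝ → E d → ℝ) (hρ : ∀ t y, ρ t y = ∫ w : E d, ‖α (t, (y, w))‖ ^ 2)
    (F : ℝ → E d → E d) (hF : ∀ t x, F t x = -∫ y : E d, ρ t y • gradNewton d (x - y))
    (φ : ℝ → E d → (E d →L[ℝ] ℂ))
    (hφ : ∀ t y, φ t y =
      ∫ w : E d, (starRingEnd ℂ) (α (t, (y, w))) • fderiv ℝ (fun w' : E d => α (t, (y, w'))) w)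
    (K : ℝ → E d → ℂ) (hK : ∀ t x, K t x = -∫ y : E d, φ t y (gradNewton d (x - y)))
    (hint1 : ∀ t ∈ I, ∀ y : E d, Integrable (fun w : E d => ‖α (t, (y, w))‖ ^ 2))
    (hint2 : ∀ t ∈ I, ∀ x : E d, Integrable (fun y : E d => ρ t y • gradNewton d (x - y)))
    (hint3 : ∀ t ∈ I, ∀ y : E d, Integrable (fun w : E d =>
      (starRingEnd ℂ) (α (t, (y, w))) • fderiv ℝ (fun w' : E d => α (t, (y, w'))) w))
    (hint4 : ∀ t ∈ I, ∀ x : E d, Integrable (fun y : E d => φ t y (gradNewton d (x - y))))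
    (hKim : ∀ t ∈ I, ∀ x : E d, (K t x).re = 0)
    (heqn : ∀ t ∈ I, ∀ z : E d × E d,
      fderiv ℝ α (t, z) (1, 0) =
        -(fderiv ℝ α (t, z) (0, (z.2, 0))) - fderiv ℝ α (t, z) (0, (0, F t z.1)) +
          K t z.1 * α (t, z)) :
    ∀ t ∈ I, ∀ z : E d × E d,
      fderiv ℝ (fun q : ℝ × (E d × E d) => ‖α q‖ ^ 2) (t, z) (1, 0) +
        fderiv ℝ (fun q : ℝ × (E d × E d) => ‖α q‖ ^ 2) (t, z) (0, (z.2, 0)) +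
        fderiv ℝ (fun q : ℝ × (E d × E d) => ‖α q‖ ^ 2) (t, z) (0, (0, F t z.1)) = 0 := by
  intro t ht z
  set p : ℝ × (E d × E d) := (t, z) with hp
  have hopen : IsOpen (I ×ˢ (Set.univ : Set (E d × E d))) := hIopen.prod isOpen_univ
  have hpmem : p ∈ I ×ˢ (Set.univ : Set (E d × E d)) := ⟨ht, trivial⟩
  have hdiff : DifferentiableAt ℝ α p :=
    (hα.contDiffAt (hopen.mem_nhds hpmem)).differentiableAt one_ne_zero
  set D : ℝ × (E d × E d) →L[ℝ] ℂ := fderiv ℝ α p with hD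
  have hA : HasFDerivAt α D p := hdiff.hasFDerivAt
  have hconj : HasFDerivAt (fun q => (starRingEnd ℂ) (α q))
      ((Complex.conjCLE : ℂ ≃L[ℝ] ℂ).toContinuousLinearMap.comp D) p :=
    (Complex.conjCLE.toContinuousLinearMap.hasFDerivAt).comp p hA
  have hmul := hA.mul hconj
  have hre := (Complex.reCLM.hasFDerivAt).comp p hmul
  have hfun : (fun q : ℝ × (E d × E d) => ‖α q‖ ^ 2)
      = fun q => Complex.reCLM (α q * (starRingEnd ℂ) (α q)) := by
    funext q
    simp [Complex.mul_conj, Complex.sq_norm]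
  have hfd := hre.fderiv
  simp only [Function.comp_def, Pi.mul_apply] at hfd
  rw [hfun]
  rw [hfd]
  have heq := heqn t ht z
  rw [← hp, ← hD] at heq
  simp only [ContinuousLinearMap.coe_comp', Function.comp_apply,
    ContinuousLinearMap.add_apply, ContinuousLinearMap.smul_apply,
    ContinuousLinearEquiv.coe_coe, Complex.conjCLE_apply, smul_eq_mul,
    Complex.reCLM_apply, ← Complex.add_re]
  set a := α p with ha
  set c := K t z.1 with hc
  have hcre : c.re = 0 := hKim t ht z.1
  have hsum : D (1, 0) + D (0, (z.2, 0)) + D (0, (0, F t z.1)) = c * a := by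
    rw [heq]; ring
  have key : (a * (starRingEnd ℂ) (D (1, 0)) + (starRingEnd ℂ) a * D (1, 0))
      + (a * (starRingEnd ℂ) (D (0, (z.2, 0))) + (starRingEnd ℂ) a * D (0, (z.2, 0)))
      + (a * (starRingEnd ℂ) (D (0, (0, F t z.1))) + (starRingEnd ℂ) a * D (0, (0, F t z.1)))
      = a * (starRingEnd ℂ) (c * a) + (starRingEnd ℂ) a * (c * a) := by
    rw [← hsum]; simp only [map_add]; ring
  rw [key]
  simp [Complex.mul_re, Complex.conj_re, Complex.conj_im, Complex.mul_im, hcre]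
  ring
end
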